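/- The normalized Gauss-type sum G_j is multiplicative in its argument: for every j ∈ ℤ and all coprime positive odd integers m and n, one has G_j(mn) = G_j(m)·G_j(n). -/

import Mathlib

/-- `e(t) = e^{2πit}`. -/
noncomputable def e (t : ℝ) : ℂ := Complex.exp (2 * (Real.pi : ℂ) * Complex.I * (t : ℂ))

/-- The normalized Gauss-type sum
`G_j(n) = ((1−i)/2 + (−1/n)(1+i)/2) ∑_{a mod n} (a/n) e(aj/n)`. -/
noncomputable def G (j : ℤ) (n : ℕ) : ℂ :=
  ((1 - Complex.I) / 2 + (jacobiSym (-1) n : ℂ) * (1 + Complex.I) / 2) *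
    ∑ a ∈ Finset.range n, (jacobiSym (a : ℤ) n : ℂ) * e ((((a : ℤ) * j : ℤ) : ℝ) / (n : ℝ))

noncomputable def S (j : ℤ) (n : ℕ) [NeZero n] : ℂ :=
  ∑ a : ZMod n, (jacobiSym (a.val : ℤ) n : ℂ) * e ((((a.val : ℤ) * j : ℤ) : ℝ) / (n : ℝ))

lemma e_add (x y : ℝ) : e (x + y) = e x * e y := by
  simp only [e, Complex.ofReal_add]
  rw [← Complex.exp_add]; ring_nf

lemma e_int (k : ℤ) : e k = 1 := by
  simp only [e]
  rw [show 2 * (Real.pi : ℂ) * Complex.I * ((k:ℝ):ℂ) = (k:ℤ) * (2 * Real.pi * Complex.I) by push_cast; ring]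
  exact Complex.exp_int_mul_two_pi_mul_I k

lemma e_congr {n : ℕ} (hn : 0 < n) {A B : ℤ} (h : (n:ℤ) ∣ (A - B)) :
    e ((A : ℝ) / n) = e ((B : ℝ) / n) := by
  obtain ⟨k, hk⟩ := h
  have hn' : (n : ℝ) ≠ 0 := Nat.cast_ne_zero.mpr hn.ne'
  have hA : (A : ℝ) / n = (B : ℝ) / n + (k : ℝ) := by
    have h2 : (A : ℝ) = B + n * k := by exact_mod_cast congrArg (Int.cast : ℤ → ℝ) (by linarith [hk])
    field_simp [h2]; linear_combination h2
  rw [hA, e_add, show ((k:ℝ)) = ((k:ℤ):ℝ) by norm_cast, e_int, mul_one]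

lemma range_eq_S (j : ℤ) (n : ℕ) [NeZero n] :
    ∑ a ∈ Finset.range n, (jacobiSym (a : ℤ) n : ℂ) * e ((((a : ℤ) * j : ℤ) : ℝ) / (n : ℝ))
      = S j n := by
  rw [S]
  refine Finset.sum_nbij' (fun a => ((a : ℕ) : ZMod n)) (fun a => a.val) ?_ ?_ ?_ ?_ ?_
  · intro a _; exact Finset.mem_univ _
  · intro a _; exact Finset.mem_range.mpr (ZMod.val_lt a)
  · intro a ha; exact ZMod.val_natCast_of_lt (Finset.mem_range.mp ha)
  · intro a _; exact ZMod.natCast_rightInverse a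
  · intro a ha; rw [ZMod.val_natCast_of_lt (Finset.mem_range.mp ha)]

lemma twist (j t : ℤ) (w : ℕ) (n : ℕ) [NeZero n] (h : (n:ℤ) ∣ ((w : ℤ) * t - 1)) :
    ∑ a : ZMod n, (jacobiSym (a.val : ℤ) n : ℂ) * e ((((a.val : ℤ) * (t * j) : ℤ) : ℝ) / (n : ℝ))
      = (jacobiSym (w : ℤ) n : ℂ) * S j n := by
  have hn : 0 < n := Nat.pos_of_ne_zero (NeZero.ne n)
  have hunit : ((w : ZMod n)) * ((t : ℤ) : ZMod n) = 1 := by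
    have := (ZMod.intCast_zmod_eq_zero_iff_dvd ((w : ℤ) * t - 1) n).mpr h
    push_cast at this
    linear_combination this
  have hbij : Function.Bijective (fun a : ZMod n => (w : ZMod n) * a) := by
    rw [Finite.injective_iff_bijective.symm]
    intro a b hab
    have := congrArg (fun x => ((t : ℤ) : ZMod n) * x) hab
    simpa [← mul_assoc, mul_comm ((t:ℤ) : ZMod n) ((w:ℕ) : ZMod n), hunit] using this
  let E : ZMod n ≃ ZMod n := Equiv.ofBijective _ hbij
  have key : ∀ a : ZMod n,
      (jacobiSym ((E a).val : ℤ) n : ℂ) * e ((((E a).val : ℤ) * (t * j) : ℤ) / (n : ℝ))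
        = (jacobiSym (w : ℤ) n : ℂ) *
          ((jacobiSym (a.val : ℤ) n : ℂ) * e ((((a.val : ℤ) * j : ℤ) : ℝ) / (n : ℝ))) := by
    intro a
    have hEa : E a = (w : ZMod n) * a := rfl
    have hval : (n : ℤ) ∣ (((E a).val : ℤ) - (w : ℤ) * (a.val : ℤ)) := by
      have hc : (((E a).val : ℕ) : ZMod n) = (((w * a.val : ℕ) : ZMod n)) := by
        rw [hEa]; push_cast [ZMod.natCast_val, ZMod.cast_id]; rfl
      have h2 := (Nat.modEq_iff_dvd (n := n)).mp ((ZMod.natCast_eq_natCast_iff _ _ _).mp hc)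
      obtain ⟨k, hk⟩ := h2
      refine ⟨-k, ?_⟩
      push_cast at hk ⊢
      linarith
    obtain ⟨k1, hk1⟩ := hval
    obtain ⟨k2, hk2⟩ := h
    have hE : e ((((E a).val : ℤ) * (t * j) : ℤ) / (n:ℝ))
        = e ((((a.val : ℤ) * j : ℤ) : ℝ) / n) := by
      apply e_congr hn
      exact ⟨k1 * (t * j) + (a.val : ℤ) * j * k2,
        by linear_combination (t*j) * hk1 + ((a.val : ℤ)*j) * hk2⟩
    have hJ : jacobiSym (((E a).val : ℕ) : ℤ) n
        = jacobiSym (w : ℤ) n * jacobiSym ((a.val : ℕ) : ℤ) n := by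
      rw [← jacobiSym.mul_left]
      apply jacobiSym.mod_left'
      have h4 := Int.ModEq.symm (Int.modEq_iff_dvd.mpr ⟨k1, hk1⟩)
      push_cast at h4 ⊢
      exact h4
    rw [hE, hJ]
    push_cast
    ring
  calc ∑ a : ZMod n, (jacobiSym (a.val : ℤ) n : ℂ) * e ((((a.val : ℤ) * (t * j) : ℤ) : ℝ) / (n : ℝ))
      = ∑ a : ZMod n, (jacobiSym ((E a).val : ℤ) n : ℂ) * e ((((E a).val : ℤ) * (t * j) : ℤ) / (n : ℝ)) :=
        (Equiv.sum_comp E fun a => (jacobiSym (a.val : ℤ) n : ℂ) * e ((((a.val : ℤ) * (t * j) : ℤ) : ℝ) / (n : ℝ))).symm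
    _ = ∑ a : ZMod n, (jacobiSym (w : ℤ) n : ℂ) *
          ((jacobiSym (a.val : ℤ) n : ℂ) * e ((((a.val : ℤ) * j : ℤ) : ℝ) / (n : ℝ))) :=
        Finset.sum_congr rfl fun a _ => key a
    _ = (jacobiSym (w : ℤ) n : ℂ) * S j n := by rw [← Finset.mul_sum, S]

lemma S_mul (j : ℤ) (m n : ℕ) [NeZero m] [NeZero n] (hmn : Nat.Coprime m n) :
    haveI : NeZero (m * n) := ⟨mul_ne_zero (NeZero.ne m) (NeZero.ne n)⟩
    S j (m * n) = ((jacobiSym (n : ℤ) m * jacobiSym (m : ℤ) n : ℤ) : ℂ) * (S j m * S j n) := by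
  haveI : NeZero (m * n) := ⟨mul_ne_zero (NeZero.ne m) (NeZero.ne n)⟩
  have hm : 0 < m := Nat.pos_of_ne_zero (NeZero.ne m)
  have hn : 0 < n := Nat.pos_of_ne_zero (NeZero.ne n)
  set A := Nat.gcdA m n with hA
  set B := Nat.gcdB m n with hB
  have hbez : (1 : ℤ) = m * A + n * B := by
    have := Nat.gcd_eq_gcd_ab m n
    rwa [hmn] at this
  have hφ : Function.Bijective
      (fun a : ZMod (m * n) => (((a.val : ℕ) : ZMod m), ((a.val : ℕ) : ZMod n))) := by
    rw [Fintype.bijective_iff_injective_and_card]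
    constructor
    · intro a b hab
      have h1 : a.val ≡ b.val [MOD m] :=
        (ZMod.natCast_eq_natCast_iff _ _ _).mp (congrArg Prod.fst hab)
      have h2 : a.val ≡ b.val [MOD n] :=
        (ZMod.natCast_eq_natCast_iff _ _ _).mp (congrArg Prod.snd hab)
      have h3 : a.val ≡ b.val [MOD m * n] :=
        (Nat.modEq_and_modEq_iff_modEq_mul hmn).mp ⟨h1, h2⟩
      have h4 : a.val = b.val := h3.eq_of_lt_of_lt (ZMod.val_lt a) (ZMod.val_lt b)
      exact ZMod.val_injective _ h4
    · simp [ZMod.card]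
  have hkey : ∀ a : ZMod (m * n),
      (jacobiSym (a.val : ℤ) (m * n) : ℂ) * e ((((a.val : ℤ) * j : ℤ) : ℝ) / ((m * n : ℕ) : ℝ))
      = ((jacobiSym (((a.val : ZMod m)).val : ℤ) m : ℂ) *
          e (((((a.val : ZMod m)).val : ℤ) * (B * j) : ℤ) / (m : ℝ))) *
        ((jacobiSym (((a.val : ZMod n)).val : ℤ) n : ℂ) *
          e (((((a.val : ZMod n)).val : ℤ) * (A * j) : ℤ) / (n : ℝ))) := by
    intro a
    have hbm : ((a.val : ZMod m)).val = a.val % m := ZMod.val_natCast _ _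
    have hbn : ((a.val : ZMod n)).val = a.val % n := ZMod.val_natCast _ _
    have hJ : jacobiSym (a.val : ℤ) (m * n)
        = jacobiSym (((a.val : ZMod m)).val : ℤ) m * jacobiSym (((a.val : ZMod n)).val : ℤ) n := by
      rw [jacobiSym.mul_right, hbm, hbn]
      congr 1
      · apply jacobiSym.mod_left'; push_cast
        exact (Int.emod_emod_of_dvd _ dvd_rfl).symm
      · apply jacobiSym.mod_left'; push_cast
        exact (Int.emod_emod_of_dvd _ dvd_rfl).symm
    have hsplit : ((((a.val : ℤ) * j : ℤ)) : ℝ) / ((m * n : ℕ) : ℝ)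
        = ((((a.val : ℤ) * (B * j) : ℤ)) : ℝ) / (m : ℝ) + ((((a.val : ℤ) * (A * j) : ℤ)) : ℝ) / (n : ℝ) := by
      have hm' : (m : ℝ) ≠ 0 := Nat.cast_ne_zero.mpr hm.ne'
      have hn' : (n : ℝ) ≠ 0 := Nat.cast_ne_zero.mpr hn.ne'
      have hbezR : (1 : ℝ) = m * A + n * B := by exact_mod_cast congrArg (Int.cast : ℤ → ℝ) hbez
      field_simp
      push_cast
      linear_combination (((a.val : ℕ) : ℝ) * (j : ℝ) * (m : ℝ) * (n : ℝ)) * hbezR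
    have hem : e ((((a.val : ℤ) * (B * j) : ℤ)) / (m : ℝ))
        = e (((((a.val : ZMod m)).val : ℤ) * (B * j) : ℤ) / (m : ℝ)) := by
      apply e_congr hm
      have hd : (m : ℤ) ∣ ((a.val : ℤ) - (((a.val : ZMod m)).val : ℤ)) := by
        rw [hbm]; push_cast
        exact ⟨(a.val : ℤ) / m, by have := Int.mul_ediv_add_emod (a.val : ℤ) m; linarith⟩
      obtain ⟨k, hk⟩ := hd
      exact ⟨k * (B * j), by linear_combination (B * j) * hk⟩
    have hen : e ((((a.val : ℤ) * (A * j) : ℤ)) / (n : ℝ))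
        = e (((((a.val : ZMod n)).val : ℤ) * (A * j) : ℤ) / (n : ℝ)) := by
      apply e_congr hn
      have hd : (n : ℤ) ∣ ((a.val : ℤ) - (((a.val : ZMod n)).val : ℤ)) := by
        rw [hbn]; push_cast
        exact ⟨(a.val : ℤ) / n, by have := Int.mul_ediv_add_emod (a.val : ℤ) n; linarith⟩
      obtain ⟨k, hk⟩ := hd
      exact ⟨k * (A * j), by linear_combination (A * j) * hk⟩
    rw [hJ, hsplit, e_add, hem, hen]
    push_cast
    ring
  have hsum : S j (m * n)
      = ∑ p : ZMod m × ZMod n,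
          ((jacobiSym ((p.1).val : ℤ) m : ℂ) * e ((((p.1).val : ℤ) * (B * j) : ℤ) / (m : ℝ))) *
          ((jacobiSym ((p.2).val : ℤ) n : ℂ) * e ((((p.2).val : ℤ) * (A * j) : ℤ) / (n : ℝ))) := by
    rw [S]
    exact Fintype.sum_bijective _ hφ _ _ hkey
  rw [hsum, Fintype.sum_prod_type]
  dsimp only
  rw [← Finset.sum_mul_sum]
  have hBm : (m : ℤ) ∣ ((n : ℤ) * B - 1) := ⟨-A, by linear_combination -hbez⟩
  have hAn : (n : ℤ) ∣ ((m : ℤ) * A - 1) := ⟨-B, by linear_combination -hbez⟩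
  rw [twist j B n m hBm, twist j A m n hAn]
  push_cast
  ring

lemma sign_lemma (m n : ℕ) (hmo : Odd m) (hno : Odd n) (hmn : Nat.Coprime m n) :
    ((1 - Complex.I) / 2 + (jacobiSym (-1) (m * n) : ℂ) * (1 + Complex.I) / 2) *
      ((jacobiSym (n : ℤ) m * jacobiSym (m : ℤ) n : ℤ) : ℂ)
    = ((1 - Complex.I) / 2 + (jacobiSym (-1) m : ℂ) * (1 + Complex.I) / 2) *
      ((1 - Complex.I) / 2 + (jacobiSym (-1) n : ℂ) * (1 + Complex.I) / 2) := by
  have hrec : jacobiSym (n : ℤ) m * jacobiSym (m : ℤ) n = (-1 : ℤ) ^ (m / 2 * (n / 2)) := by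
    rw [jacobiSym.quadratic_reciprocity hmo hno]
    have hsq : jacobiSym (n : ℤ) m ^ 2 = 1 :=
      jacobiSym.sq_one (by rw [Int.gcd_natCast_natCast]; exact hmn.symm)
    linear_combination ((-1 : ℤ) ^ (m / 2 * (n / 2))) * hsq
  rw [jacobiSym.at_neg_one hmo, jacobiSym.at_neg_one hno, jacobiSym.at_neg_one (hmo.mul hno), hrec]
  have hm2 : m / 2 % 2 = m % 4 / 2 := by
    have := (Nat.mod_mul_right_div_self m 2 2).symm
    omega
  have hn2 : n / 2 % 2 = n % 4 / 2 := by
    have := (Nat.mod_mul_right_div_self n 2 2).symm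
    omega
  obtain h1 | h3 := Nat.odd_mod_four_iff.mp (Nat.odd_iff.mp hmo) <;>
    obtain k1 | k3 := Nat.odd_mod_four_iff.mp (Nat.odd_iff.mp hno)
  · have hp : (-1 : ℤ) ^ (m / 2 * (n / 2)) = 1 :=
      Even.neg_one_pow (Nat.even_mul.mpr (Or.inl (Nat.even_iff.mpr (by omega))))
    have hχmn : ZMod.χ₄ ((m * n : ℕ) : ZMod 4) = 1 := by
      apply ZMod.χ₄_nat_one_mod_four; rw [Nat.mul_mod, h1, k1]
    rw [hp, hχmn, ZMod.χ₄_nat_one_mod_four h1, ZMod.χ₄_nat_one_mod_four k1]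
    push_cast; ring
  · have hp : (-1 : ℤ) ^ (m / 2 * (n / 2)) = 1 :=
      Even.neg_one_pow (Nat.even_mul.mpr (Or.inl (Nat.even_iff.mpr (by omega))))
    have hχmn : ZMod.χ₄ ((m * n : ℕ) : ZMod 4) = -1 := by
      apply ZMod.χ₄_nat_three_mod_four; rw [Nat.mul_mod, h1, k3]
    rw [hp, hχmn, ZMod.χ₄_nat_one_mod_four h1, ZMod.χ₄_nat_three_mod_four k3]
    push_cast; ring
  · have hp : (-1 : ℤ) ^ (m / 2 * (n / 2)) = 1 :=
      Even.neg_one_pow (Nat.even_mul.mpr (Or.inr (Nat.even_iff.mpr (by omega))))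
    have hχmn : ZMod.χ₄ ((m * n : ℕ) : ZMod 4) = -1 := by
      apply ZMod.χ₄_nat_three_mod_four; rw [Nat.mul_mod, h3, k1]
    rw [hp, hχmn, ZMod.χ₄_nat_three_mod_four h3, ZMod.χ₄_nat_one_mod_four k1]
    push_cast; ring
  · have hp : (-1 : ℤ) ^ (m / 2 * (n / 2)) = -1 :=
      Odd.neg_one_pow (Nat.odd_mul.mpr ⟨Nat.odd_iff.mpr (by omega), Nat.odd_iff.mpr (by omega)⟩)
    have hχmn : ZMod.χ₄ ((m * n : ℕ) : ZMod 4) = 1 := by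
      apply ZMod.χ₄_nat_one_mod_four; rw [Nat.mul_mod, h3, k3]
    rw [hp, hχmn, ZMod.χ₄_nat_three_mod_four h3, ZMod.χ₄_nat_three_mod_four k3]
    push_cast
    linear_combination (-1 : ℂ) * Complex.I_sq

/-- `G_j` is multiplicative: `G_j(mn) = G_j(m) G_j(n)` for coprime odd positive `m, n`. -/
theorem G_multiplicative (j : ℤ) (m n : ℕ) (hm : 0 < m) (hn : 0 < n)
    (hmo : Odd m) (hno : Odd n) (hmn : Nat.Coprime m n) :
    G j (m * n) = G j m * G j n := by
  haveI : NeZero m := ⟨hm.ne'⟩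
  haveI : NeZero n := ⟨hn.ne'⟩
  haveI : NeZero (m * n) := ⟨mul_ne_zero hm.ne' hn.ne'⟩
  rw [G, G, G, range_eq_S, range_eq_S, range_eq_S, S_mul j m n hmn]
  have hsign := sign_lemma m n hmo hno hmn
  linear_combination (S j m * S j n) * hsign
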